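/- Let n ≥ 2 and let f : ℤⁿ → ℤⁿ. If f preserves the congruences of the group (ℤⁿ, +) associated with the subgroups ℤ_(k) = {x ∈ ℤⁿ : x_i = 0 for all i ≠ k} and ℤ_(k,l) = {x ∈ ℤⁿ : x_i = 0 for i ∉ {k,l} and x_k = -x_l} for all k, l < n, then there exist a ∈ ℤⁿ and m ∈ ℤ such that f(x) = a + m·x for all x ∈ ℤⁿ. -/

import Mathlib

/-- The subgroup ℤ_(k) of ℤⁿ: elements vanishing outside coordinate k. -/
def Zk (n : ℕ) (k : Fin n) : Set (Fin n → ℤ) :=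
  {z | ∀ i : Fin n, i ≠ k → z i = 0}

/-- The subgroup ℤ_(k,l) of ℤⁿ: elements vanishing outside {k,l} with
z k = - z l. -/
def Zkl (n : ℕ) (k l : Fin n) : Set (Fin n → ℤ) :=
  {z | (∀ i : Fin n, i ≠ k → i ≠ l → z i = 0) ∧ z k = - z l}

/-- If f : ℤⁿ → ℤⁿ (n ≥ 2) preserves the congruences associated with the
subgroups ℤ_(k) and ℤ_(k,l) for all k, l < n, then f is affine:
f(x) = a + m·x. -/
theorem affine_of_preserves_congruences (n : ℕ) (hn : 2 ≤ n)
    (f : (Fin n → ℤ) → (Fin n → ℤ))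
    (h1 : ∀ k : Fin n, ∀ x y : Fin n → ℤ, x - y ∈ Zk n k → f x - f y ∈ Zk n k)
    (h2 : ∀ k l : Fin n, ∀ x y : Fin n → ℤ,
      x - y ∈ Zkl n k l → f x - f y ∈ Zkl n k l) :
    ∃ (a : Fin n → ℤ) (m : ℤ), ∀ x : Fin n → ℤ, f x = a + m • x := by
  classical
  -- Lemma 1: if x and y agree off coordinate k, so do f x and f y.
  have L1 : ∀ (k : Fin n) (x y : Fin n → ℤ), (∀ i, i ≠ k → x i = y i) →
      ∀ i, i ≠ k → f x i = f y i := by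
    intro k x y hxy i hik
    have hm : x - y ∈ Zk n k := by
      intro j hj
      simp [Pi.sub_apply, hxy j hj]
    have := h1 k x y hm i hik
    simpa [Pi.sub_apply, sub_eq_zero] using this
  -- Lemma 2: (f x) i depends only on x i.
  have key : ∀ s : Finset (Fin n), ∀ (i : Fin n) (x y : Fin n → ℤ),
      (∀ j, j ∉ s → x j = y j) → x i = y i → f x i = f y i := by
    intro s
    induction s using Finset.induction_on with
    | empty =>
      intro i x y h _
      have : x = y := funext fun j => h j (Finset.notMem_empty j)
      rw [this]
    | @insert j s' hjs ih =>
      intro i x y h hi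
      by_cases hji : j = i
      · subst hji
        apply ih j x y ?_ hi
        intro m hm
        by_cases hmj : m = j
        · subst hmj; exact hi
        · exact h m (by simp [hmj, hm])
      · set y' := Function.update y j (x j) with hy'
        have step1 : f x i = f y' i := by
          apply ih i x y' ?_ ?_
          · intro m hm
            by_cases hmj : m = j
            · subst hmj; simp [y']
            · have hms : m ∉ insert j s' := by simp [hmj, hm]
              simp [y', Function.update_of_ne hmj, h m hms]
          · simp only [y', Function.update_of_ne (fun hh => hji hh.symm)]
            exact hi
        have step2 : f y' i = f y i := by
          apply L1 j y' y ?_ i (fun hh => hji hh.symm)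
          intro m hmj
          simp [y', Function.update_of_ne hmj]
        rw [step1, step2]
  have L2 : ∀ (i : Fin n) (x y : Fin n → ℤ), x i = y i → f x i = f y i := by
    intro i x y hxy
    exact key Finset.univ i x y (fun j hj => absurd (Finset.mem_univ j) hj) hxy
  -- φ k s := f (Pi.single k s) k
  set φ : Fin n → ℤ → ℤ := fun k s => f (Pi.single k s) k with hφ
  have hφx : ∀ (k : Fin n) (x : Fin n → ℤ), f x k = φ k (x k) := by
    intro k x
    exact L2 k x (Pi.single k (x k)) (by simp)
  -- Key relation from h2.
  have L3 : ∀ k l : Fin n, k ≠ l → ∀ u v t : ℤ,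
      φ k (u + t) - φ k u = φ l v - φ l (v - t) := by
    intro k l hkl u v t
    set x : Fin n → ℤ := Pi.single k (u + t) + Pi.single l (v - t) with hx
    set y : Fin n → ℤ := Pi.single k u + Pi.single l v with hy
    have hmem : x - y ∈ Zkl n k l := by
      constructor
      · intro i hik hil
        simp [x, y, Pi.single_eq_of_ne hik, Pi.single_eq_of_ne hil]
      · simp [x, y, Pi.single_eq_of_ne hkl, Pi.single_eq_of_ne (Ne.symm hkl)]
    have hf := (h2 k l x y hmem).2
    have hxk : x k = u + t := by
      simp [x, Pi.single_eq_of_ne hkl]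
    have hyk : y k = u := by
      simp [y, Pi.single_eq_of_ne hkl]
    have hxl : x l = v - t := by
      simp [x, Pi.single_eq_of_ne (Ne.symm hkl)]
    have hyl : y l = v := by
      simp [y, Pi.single_eq_of_ne (Ne.symm hkl)]
    have e1 : f x k = φ k (u + t) := by rw [hφx k x, hxk]
    have e2 : f y k = φ k u := by rw [hφx k y, hyk]
    have e3 : f x l = φ l (v - t) := by rw [hφx l x, hxl]
    have e4 : f y l = φ l v := by rw [hφx l y, hyl]
    have : f x k - f y k = -(f x l - f y l) := by
      simpa [Pi.sub_apply] using hf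
    rw [e1, e2, e3, e4] at this
    linarith
  -- slope of φ k
  set m : Fin n → ℤ := fun k => φ k 1 - φ k 0 with hm
  -- existence of another index
  have hex : ∀ k : Fin n, ∃ l : Fin n, l ≠ k :=
    fun k => Fintype.exists_ne_of_one_lt_card (by simp; omega) k
  have step : ∀ (k : Fin n) (u : ℤ), φ k (u + 1) - φ k u = m k := by
    intro k u
    obtain ⟨l, hl⟩ := hex k
    have h1' := L3 k l (Ne.symm hl) u 0 1
    have h2' := L3 k l (Ne.symm hl) 0 0 1
    rw [zero_add] at h2'
    show φ k (u + 1) - φ k u = φ k 1 - φ k 0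
    linarith
  have hφ0 : ∀ k : Fin n, φ k 0 = f 0 k := by
    intro k
    simp [hφ]
  have hlin : ∀ (k : Fin n) (u : ℤ), φ k u = f 0 k + m k * u := by
    intro k u
    induction u using Int.induction_on with
    | zero => simp [hφ0 k]
    | succ i ih =>
      have hst := step k i
      have hexp : m k * ((i : ℤ) + 1) = m k * (i : ℤ) + m k := by ring
      push_cast at ih
      linarith
    | pred i ih =>
      have := step k (-i - 1)
      have h' : (-i - 1 : ℤ) + 1 = -i := by ring
      rw [h'] at this
      have hexp : m k * (-(i : ℤ) - 1) = m k * (-(i : ℤ)) - m k := by ring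
      push_cast at ih
      linarith
  -- all slopes equal
  have hmeq : ∀ k l : Fin n, m k = m l := by
    intro k l
    by_cases hkl : k = l
    · rw [hkl]
    · have := L3 k l hkl 0 0 1
      have hk := hlin k 1
      have hk0 := hlin k 0
      have hl0 := hlin l 0
      have hl1 := hlin l (0 - 1)
      rw [zero_add, hk, hk0, hl0, hl1] at this
      linarith
  obtain ⟨k0, -⟩ := hex ⟨0, by omega⟩
  refine ⟨f 0, m k0, fun x => ?_⟩
  funext k
  have := hφx k x
  rw [hlin k (x k)] at this
  rw [this, hmeq k k0]
  simp [mul_comm]
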